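/- Variational lower bound on mutual information (discrete Barber–Agakov bound, equation (6) of the paper): let 𝒴 and 𝒵 be finite sets, let p be a joint probability mass function on 𝒴 × 𝒵 with marginals p_Y and p_Z, and let q be any conditional probability mass function, i.e. q(·|z) is a probability mass function on 𝒴 for each z ∈ 𝒵, with q(y|z) > 0 whenever p(y,z) > 0. Then I(Y;Z) ≥ Σ_{(y,z): p(y,z) > 0} p(y,z)·log q(y|z) + H(Y), where I(Y;Z) = Σ_{(y,z): p(y,z) > 0} p(y,z)·log( p(y,z)/(p_Y(y)·p_Z(z)) ) and H(Y) = −Σ_{y: p_Y(y) > 0} p_Y(y)·log p_Y(y). -/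
import Mathlib


open Real Finset

/-- Variational lower bound on mutual information (discrete Barber–Agakov bound, equation (6)
of the paper): for a joint pmf `p` on finite sets `𝒴 × 𝒵` with marginals `p_Y, p_Z` and any
conditional pmf `q` with `q(y|z) > 0` whenever `p(y,z) > 0`,
`I(Y;Z) ≥ Σ_{p(y,z)>0} p(y,z)·log q(y|z) + H(Y)`. -/
theorem barber_agakov_bound {𝒴 𝒵 : Type*} [Fintype 𝒴] [Fintype 𝒵]
    (p : 𝒴 → 𝒵 → ℝ)
    (hp0 : ∀ y z, 0 ≤ p y z)
    (hp1 : ∑ y : 𝒴, ∑ z : 𝒵, p y z = 1)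
    (pY : 𝒴 → ℝ) (hpY : ∀ y, pY y = ∑ z : 𝒵, p y z)
    (pZ : 𝒵 → ℝ) (hpZ : ∀ z, pZ z = ∑ y : 𝒴, p y z)
    (q : 𝒴 → 𝒵 → ℝ)
    (hq0 : ∀ y z, 0 ≤ q y z)
    (hq1 : ∀ z : 𝒵, ∑ y : 𝒴, q y z = 1)
    (hqpos : ∀ y z, 0 < p y z → 0 < q y z) :
    (∑ y : 𝒴, ∑ z : 𝒵, if 0 < p y z then p y z * Real.log (p y z / (pY y * pZ z)) else 0)
      ≥ (∑ y : 𝒴, ∑ z : 𝒵, if 0 < p y z then p y z * Real.log (q y z) else 0)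
        + (- ∑ y : 𝒴, if 0 < pY y then pY y * Real.log (pY y) else 0) := by
  have hpY0 : ∀ y, 0 ≤ pY y := fun y => (hpY y) ▸ Finset.sum_nonneg fun z _ => hp0 y z
  have hpZ0 : ∀ z, 0 ≤ pZ z := fun z => (hpZ z) ▸ Finset.sum_nonneg fun y _ => hp0 y z
  -- entropy sum rewritten as a double sum
  have hC : (∑ y : 𝒴, if 0 < pY y then pY y * Real.log (pY y) else 0)
      = ∑ y : 𝒴, ∑ z : 𝒵, (if 0 < p y z then p y z * Real.log (pY y) else 0) := by
    refine Finset.sum_congr rfl fun y _ => ?_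
    have hsum : ∑ z : 𝒵, (if 0 < p y z then p y z * Real.log (pY y) else 0)
        = (∑ z : 𝒵, p y z) * Real.log (pY y) := by
      rw [Finset.sum_mul]
      refine Finset.sum_congr rfl fun z _ => ?_
      rcases lt_or_eq_of_le (hp0 y z) with h | h
      · simp [h]
      · simp [← h]
    rw [hsum, ← hpY y]
    by_cases h : 0 < pY y
    · simp [h]
    · have h0 : pY y = 0 := le_antisymm (not_lt.mp h) (hpY0 y)
      simp [h0]
  -- pointwise key inequality
  have key : ∀ y z, p y z - pZ z * q y z ≤
      (if 0 < p y z then p y z * Real.log (p y z / (pY y * pZ z)) else 0)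
      - (if 0 < p y z then p y z * Real.log (q y z) else 0)
      + (if 0 < p y z then p y z * Real.log (pY y) else 0) := by
    intro y z
    by_cases h : 0 < p y z
    · have hq := hqpos y z h
      have hpYy : 0 < pY y := by
        rw [hpY y]
        exact lt_of_lt_of_le h (Finset.single_le_sum (fun z _ => hp0 y z) (mem_univ z))
      have hpZz : 0 < pZ z := by
        rw [hpZ z]
        exact lt_of_lt_of_le h (Finset.single_le_sum (fun y _ => hp0 y z) (mem_univ y))
      have hr : 0 < pZ z * q y z := mul_pos hpZz hq
      simp only [if_pos h]
      have hlog : p y z * Real.log (p y z / (pY y * pZ z)) - p y z * Real.log (q y z)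
          + p y z * Real.log (pY y)
          = p y z * (Real.log (p y z) - Real.log (pZ z * q y z)) := by
        rw [Real.log_div h.ne' (by positivity), Real.log_mul hpYy.ne' hpZz.ne',
          Real.log_mul hpZz.ne' hq.ne']
        ring
      rw [hlog]
      have hgibbs : Real.log ((pZ z * q y z) / p y z) ≤ (pZ z * q y z) / p y z - 1 :=
        Real.log_le_sub_one_of_pos (by positivity)
      have hmul := mul_le_mul_of_nonneg_left hgibbs h.le
      rw [Real.log_div hr.ne' h.ne'] at hmul
      have hdiv : p y z * ((pZ z * q y z) / p y z) = pZ z * q y z := by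
        field_simp
      nlinarith [hmul, hdiv]
    · have h0 : p y z = 0 := le_antisymm (not_lt.mp h) (hp0 y z)
      simp only [if_neg h]
      nlinarith [mul_nonneg (hpZ0 z) (hq0 y z)]
  -- sum the key inequality
  have hsumkey : ∑ y : 𝒴, ∑ z : 𝒵, (p y z - pZ z * q y z) ≤
      ∑ y : 𝒴, ∑ z : 𝒵, ((if 0 < p y z then p y z * Real.log (p y z / (pY y * pZ z)) else 0)
      - (if 0 < p y z then p y z * Real.log (q y z) else 0)
      + (if 0 < p y z then p y z * Real.log (pY y) else 0)) :=
    Finset.sum_le_sum fun y _ => Finset.sum_le_sum fun z _ => key y z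
  have hZsum : ∑ z : 𝒵, pZ z = 1 := by
    rw [← hp1, Finset.sum_comm]
    exact Finset.sum_congr rfl fun z _ => hpZ z
  have hLHS : ∑ y : 𝒴, ∑ z : 𝒵, (p y z - pZ z * q y z) = 0 := by
    have : ∑ y : 𝒴, ∑ z : 𝒵, pZ z * q y z = 1 := by
      rw [Finset.sum_comm]
      have : ∀ z : 𝒵, ∑ y : 𝒴, pZ z * q y z = pZ z := by
        intro z
        rw [← Finset.mul_sum, hq1 z, mul_one]
      rw [Finset.sum_congr rfl fun z _ => this z, hZsum]
    simp only [Finset.sum_sub_distrib]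
    rw [hp1, this]
    ring
  rw [hLHS] at hsumkey
  simp only [Finset.sum_add_distrib, Finset.sum_sub_distrib] at hsumkey
  rw [hC]
  linarith [hsumkey]
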